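/- Let n be a natural number, I : Set (Fin n), τ a permutation of Fin n, and ν ∈ H(I). Then for every family 𝒢 : Set (Set (Fin n)), the number of σ ∈ H(I) with 𝒢[σ⁻¹ * τ * σ] = 𝒢 equals the number of σ ∈ H(I) with 𝒢[σ⁻¹ * τ * σ] = (fun B => ν '' B) '' 𝒢. (This is the correctness of the secure grouping protocol: when σ is chosen uniformly from the permutations fixing I, each achievable grouping, and any relabeling of it by a permutation fixing I, occurs with equal probability.) -/

import Mathlib

/-- The grouping (orbit partition) specified by a permutation. -/
def grouping {n : ℕ} (π : Equiv.Perm (Fin n)) : Set (Set (Fin n)) :=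
  Set.range (fun i => {x | Equiv.Perm.SameCycle π i x})

/-- The set of permutations fixing every element of `I` pointwise. -/
def fixesSet {n : ℕ} (I : Set (Fin n)) : Set (Equiv.Perm (Fin n)) :=
  {σ | ∀ a ∈ I, σ a = a}

lemma grouping_conj {n : ℕ} (π ν : Equiv.Perm (Fin n)) :
    grouping (ν * π * ν⁻¹) = (fun B => ⇑ν '' B) '' grouping π := by
  unfold grouping
  ext B
  simp only [Set.mem_range, Set.mem_image, exists_exists_eq_and]
  constructor
  · rintro ⟨i, rfl⟩
    refine ⟨ν⁻¹ i, ?_⟩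
    ext x
    simp only [Set.mem_image, Set.mem_setOf_eq, Equiv.Perm.sameCycle_conj]
    constructor
    · rintro ⟨y, hy, rfl⟩; simpa using hy
    · intro h; exact ⟨ν⁻¹ x, h, by simp⟩
  · rintro ⟨i, rfl⟩
    refine ⟨ν i, ?_⟩
    ext x
    simp only [Set.mem_image, Set.mem_setOf_eq, Equiv.Perm.sameCycle_conj]
    constructor
    · intro h; exact ⟨ν⁻¹ x, by simpa using h, by simp⟩
    · rintro ⟨y, hy, rfl⟩; simpa using hy

theorem secure_grouping_correctness {n : ℕ} (I : Set (Fin n)) (τ : Equiv.Perm (Fin n))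
    (ν : Equiv.Perm (Fin n)) (hν : ν ∈ fixesSet I) (𝒢 : Set (Set (Fin n))) :
    Nat.card {σ : Equiv.Perm (Fin n) // σ ∈ fixesSet I ∧ grouping (σ⁻¹ * τ * σ) = 𝒢} =
      Nat.card {σ : Equiv.Perm (Fin n) //
        σ ∈ fixesSet I ∧ grouping (σ⁻¹ * τ * σ) = (fun B => ⇑ν '' B) '' 𝒢} := by
  have hνinv : ν⁻¹ ∈ fixesSet I := by
    intro a ha
    have := hν a ha
    conv_lhs => rw [← this]
    simp
  refine Nat.card_congr ⟨fun ⟨σ, hσ, hg⟩ => ⟨σ * ν⁻¹, ?_, ?_⟩,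
    fun ⟨σ, hσ, hg⟩ => ⟨σ * ν, ?_, ?_⟩, ?_, ?_⟩
  · intro a ha; show (σ * ν⁻¹) a = a; rw [Equiv.Perm.mul_apply, hνinv a ha, hσ a ha]
  · have : (σ * ν⁻¹)⁻¹ * τ * (σ * ν⁻¹) = ν * (σ⁻¹ * τ * σ) * ν⁻¹ := by group
    rw [this, grouping_conj, hg]
  · intro a ha; simp [hν a ha, hσ a ha]
  · have : (σ * ν)⁻¹ * τ * (σ * ν) = ν⁻¹ * (σ⁻¹ * τ * σ) * ν := by group
    rw [this]
    have h2 : grouping (ν⁻¹ * (σ⁻¹ * τ * σ) * (ν⁻¹)⁻¹) =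
        (fun B => ⇑ν⁻¹ '' B) '' grouping (σ⁻¹ * τ * σ) := grouping_conj _ _
    simp only [inv_inv] at h2
    rw [h2, hg, ← Set.image_comp]
    have : (fun B => ⇑ν⁻¹ '' B) ∘ (fun B => ⇑ν '' B) = id := by
      funext B; simp [← Set.image_comp]
    rw [this, Set.image_id]
  · rintro ⟨σ, hσ, hg⟩; simp
  · rintro ⟨σ, hσ, hg⟩; simp
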